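/- Let d_1,…,d_n be reals with d_1 = d_n = 1. Then D·P = Q·D; moreover, both products equal the matrix whose only nonzero entry is a 1 in position (1, n). -/

import Mathlib

open Finset Matrix

/-- The matrix `D` with entries `d_{ij}`: `0` for `i < j`, `d_i` for `i = j`, and
`-d_j · (∏_{k=j+1}^{i-1} (1 - d_k)) · d_i` for `i > j`. -/
def Dmat (n : ℕ) (d : Fin n → ℝ) : Matrix (Fin n) (Fin n) ℝ :=
  Matrix.of fun i j =>
    if i < j then 0
    else if i = j then d i
    else -(d j) * (∏ k ∈ Finset.Ioo j i, (1 - d k)) * d i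

/-- The matrix `P` whose last column consists of ones and all other entries are `0`. -/
def Pmat (n : ℕ) : Matrix (Fin n) (Fin n) ℝ :=
  Matrix.of fun _ j => if (j : ℕ) + 1 = n then 1 else 0

/-- The matrix `Q` whose first row consists of ones and all other entries are `0`. -/
def Qmat (n : ℕ) : Matrix (Fin n) (Fin n) ℝ :=
  Matrix.of fun i _ => if (i : ℕ) = 0 then 1 else 0

lemma key1 {α : Type*} [LinearOrder α] (d : α → ℝ) (s : Finset α) :
    ∑ i ∈ s, d i * ∏ k ∈ s.filter (· < i), (1 - d k) = 1 - ∏ k ∈ s, (1 - d k) := by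
  induction s using Finset.induction_on_max with
  | empty => simp
  | insert a s ha ih =>
    have hna : a ∉ s := fun h => lt_irrefl a (ha a h)
    rw [Finset.sum_insert hna, Finset.prod_insert hna]
    have h1 : (insert a s).filter (· < a) = s := by
      ext x
      simp only [Finset.mem_filter, Finset.mem_insert]
      constructor
      · rintro ⟨h | h, hlt⟩
        · exact absurd hlt (by simp [h])
        · exact h
      · intro h; exact ⟨Or.inr h, ha x h⟩
    have h2 : ∀ i ∈ s, (insert a s).filter (· < i) = s.filter (· < i) := by
      intro i hi
      ext x
      simp only [Finset.mem_filter, Finset.mem_insert]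
      constructor
      · rintro ⟨h | h, hlt⟩
        · exact absurd (hlt.trans (ha i hi)) (by simp [h])
        · exact ⟨h, hlt⟩
      · rintro ⟨h, hlt⟩; exact ⟨Or.inr h, hlt⟩
    rw [h1, Finset.sum_congr rfl fun i hi => by rw [h2 i hi], ih]
    ring

lemma key2 {α : Type*} [LinearOrder α] (d : α → ℝ) (s : Finset α) :
    ∑ i ∈ s, d i * ∏ k ∈ s.filter (i < ·), (1 - d k) = 1 - ∏ k ∈ s, (1 - d k) := by
  induction s using Finset.induction_on_min with
  | empty => simp
  | insert a s ha ih =>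
    have hna : a ∉ s := fun h => lt_irrefl a (ha a h)
    rw [Finset.sum_insert hna, Finset.prod_insert hna]
    have h1 : (insert a s).filter (a < ·) = s := by
      ext x
      simp only [Finset.mem_filter, Finset.mem_insert]
      constructor
      · rintro ⟨h | h, hlt⟩
        · exact absurd hlt (by simp [h])
        · exact h
      · intro h; exact ⟨Or.inr h, ha x h⟩
    have h2 : ∀ i ∈ s, (insert a s).filter (i < ·) = s.filter (i < ·) := by
      intro i hi
      ext x
      simp only [Finset.mem_filter, Finset.mem_insert]
      constructor
      · rintro ⟨h | h, hlt⟩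
        · exact absurd ((ha i hi).trans hlt) (by simp [h])
        · exact ⟨h, hlt⟩
      · rintro ⟨h, hlt⟩; exact ⟨Or.inr h, hlt⟩
    rw [h1, Finset.sum_congr rfl fun i hi => by rw [h2 i hi], ih]
    ring

lemma rowsum (n : ℕ) (hn : 2 ≤ n) (d : Fin n → ℝ) (hd1 : d ⟨0, Nat.lt_of_lt_of_le Nat.zero_lt_two hn⟩ = 1)
    (i : Fin n) : ∑ k, Dmat n d i k = if (i : ℕ) = 0 then 1 else 0 := by
  have hsub : ∑ k, Dmat n d i k = ∑ k ∈ Finset.Iic i, Dmat n d i k := by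
    rw [← Finset.sum_subset (Finset.subset_univ _)]
    intro x _ hx
    simp only [Finset.mem_Iic, not_le] at hx
    simp [Dmat, hx]
  rw [hsub, ← Finset.Iio_insert, Finset.sum_insert (by simp)]
  have hd : ∀ k ∈ Finset.Iio i, Dmat n d i k = -(d k * ∏ m ∈ (Finset.Iio i).filter (k < ·), (1 - d m)) * d i := by
    intro k hk
    rw [Finset.mem_Iio] at hk
    have h1 : ¬ i < k := not_lt.mpr hk.le
    have h2 : i ≠ k := hk.ne'
    have h3 : (Finset.Iio i).filter (k < ·) = Finset.Ioo k i := by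
      ext x; simp [Finset.mem_Ioo, and_comm]
    simp only [Dmat, Matrix.of_apply, if_neg h1, if_neg h2, h3]
    ring
  rw [Finset.sum_congr rfl hd]
  have : Dmat n d i i = d i := by simp [Dmat]
  rw [this]
  rw [show (∑ k ∈ Finset.Iio i, -(d k * ∏ m ∈ (Finset.Iio i).filter (k < ·), (1 - d m)) * d i)
      = -(∑ k ∈ Finset.Iio i, d k * ∏ m ∈ (Finset.Iio i).filter (k < ·), (1 - d m)) * d i by
    simp [neg_mul, Finset.sum_neg_distrib, Finset.sum_mul]]
  rw [key2]
  by_cases h0 : (i : ℕ) = 0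
  · have : Finset.Iio i = ∅ := by
      ext x; simp only [Finset.mem_Iio, Finset.notMem_empty, iff_false, not_lt, Fin.le_def, h0]
      omega
    have hi : i = ⟨0, by omega⟩ := Fin.ext h0
    rw [this, Finset.prod_empty, if_pos h0, hi, hd1]; ring
  · have hmem : (⟨0, by omega⟩ : Fin n) ∈ Finset.Iio i := by
      simp only [Finset.mem_Iio, Fin.lt_def]; omega
    have : ∏ k ∈ Finset.Iio i, (1 - d k) = 0 :=
      Finset.prod_eq_zero hmem (by rw [hd1]; ring)
    rw [this]
    simp [h0]

lemma colsum (n : ℕ) (hn : 2 ≤ n) (d : Fin n → ℝ) (hdn : d ⟨n - 1, Nat.sub_lt (Nat.lt_of_lt_of_le Nat.zero_lt_two hn) Nat.one_pos⟩ = 1)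
    (j : Fin n) : ∑ k, Dmat n d k j = if (j : ℕ) + 1 = n then 1 else 0 := by
  have hsub : ∑ k, Dmat n d k j = ∑ k ∈ Finset.Ici j, Dmat n d k j := by
    rw [← Finset.sum_subset (Finset.subset_univ _)]
    intro x _ hx
    simp only [Finset.mem_Ici, not_le] at hx
    simp [Dmat, hx]
  rw [hsub, ← Finset.Ioi_insert, Finset.sum_insert (by simp)]
  have hd : ∀ k ∈ Finset.Ioi j, Dmat n d k j = -(d k * ∏ m ∈ (Finset.Ioi j).filter (· < k), (1 - d m)) * d j := by
    intro k hk
    rw [Finset.mem_Ioi] at hk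
    have h1 : ¬ k < j := not_lt.mpr hk.le
    have h2 : k ≠ j := hk.ne'
    have h3 : (Finset.Ioi j).filter (· < k) = Finset.Ioo j k := by
      ext x; simp [Finset.mem_Ioo, and_comm]
    simp only [Dmat, Matrix.of_apply, if_neg h1, if_neg h2, h3]
    ring
  rw [Finset.sum_congr rfl hd]
  have : Dmat n d j j = d j := by simp [Dmat]
  rw [this]
  rw [show (∑ k ∈ Finset.Ioi j, -(d k * ∏ m ∈ (Finset.Ioi j).filter (· < k), (1 - d m)) * d j)
      = -(∑ k ∈ Finset.Ioi j, d k * ∏ m ∈ (Finset.Ioi j).filter (· < k), (1 - d m)) * d j by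
    simp [neg_mul, Finset.sum_neg_distrib, Finset.sum_mul]]
  rw [key1]
  by_cases h0 : (j : ℕ) + 1 = n
  · have : Finset.Ioi j = ∅ := by
      ext x; simp only [Finset.mem_Ioi, Finset.notMem_empty, iff_false, not_lt, Fin.le_def]
      omega
    have hj : j = ⟨n - 1, by omega⟩ := Fin.ext (by show (j : ℕ) = n - 1; omega)
    rw [this, Finset.prod_empty, if_pos h0, hj, hdn]; ring
  · have hmem : (⟨n - 1, by omega⟩ : Fin n) ∈ Finset.Ioi j := by
      simp only [Finset.mem_Ioi, Fin.lt_def]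
      show (j : ℕ) < n - 1
      have := j.isLt
      omega
    have : ∏ k ∈ Finset.Ioi j, (1 - d k) = 0 :=
      Finset.prod_eq_zero hmem (by rw [hdn]; ring)
    rw [this]
    simp [h0]

theorem stmt_4 (n : ℕ) (hn : 2 ≤ n) (d : Fin n → ℝ)
    (hd1 : d ⟨0, by omega⟩ = 1) (hdn : d ⟨n - 1, by omega⟩ = 1) :
    Dmat n d * Pmat n = Qmat n * Dmat n d ∧
    Dmat n d * Pmat n =
      Matrix.of (fun i j : Fin n => if (i : ℕ) = 0 ∧ (j : ℕ) + 1 = n then (1 : ℝ) else 0) ∧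
    Qmat n * Dmat n d =
      Matrix.of (fun i j : Fin n => if (i : ℕ) = 0 ∧ (j : ℕ) + 1 = n then (1 : ℝ) else 0) := by
  have hDP : Dmat n d * Pmat n =
      Matrix.of (fun i j : Fin n => if (i : ℕ) = 0 ∧ (j : ℕ) + 1 = n then (1 : ℝ) else 0) := by
    ext i j
    simp only [Matrix.mul_apply, Pmat, Matrix.of_apply]
    rw [show (∑ k, Dmat n d i k * if (j : ℕ) + 1 = n then (1:ℝ) else 0)
        = (∑ k, Dmat n d i k) * (if (j : ℕ) + 1 = n then (1:ℝ) else 0) by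
      rw [Finset.sum_mul]]
    rw [rowsum n hn d hd1 i]
    by_cases h1 : (i : ℕ) = 0 <;> by_cases h2 : (j : ℕ) + 1 = n <;> simp [h1, h2]
  have hQD : Qmat n * Dmat n d =
      Matrix.of (fun i j : Fin n => if (i : ℕ) = 0 ∧ (j : ℕ) + 1 = n then (1 : ℝ) else 0) := by
    ext i j
    simp only [Matrix.mul_apply, Qmat, Matrix.of_apply]
    rw [show (∑ k, (if (i : ℕ) = 0 then (1:ℝ) else 0) * Dmat n d k j)
        = (if (i : ℕ) = 0 then (1:ℝ) else 0) * ∑ k, Dmat n d k j by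
      rw [Finset.mul_sum]]
    rw [colsum n hn d hdn j]
    by_cases h1 : (i : ℕ) = 0 <;> by_cases h2 : (j : ℕ) + 1 = n <;> simp [h1, h2]
  exact ⟨hDP.trans hQD.symm, hDP, hQD⟩
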